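/- Let b : ℝ^q → ℝ^q be globally Lipschitz, and let η : [0,∞) × ℝ^q → ℝ^q satisfy the flow equation η_t(x) = x + ∫₀^t b(η_s(x)) ds for all t ≥ 0 and x ∈ ℝ^q. Let h(x) = Cx + h₀(x), where C is an invertible real q × q matrix and the Lipschitz constant of x ↦ C⁻¹h₀(x) is strictly less than 1. Then there exist constants ε₀ > 0 and m, M > 0 such that for every 0 < ε < ε₀ and all x, y ∈ ℝ^q: m‖x − y‖ ≤ ‖(1/ε)∫₀^ε h(η_s(x)) ds − (1/ε)∫₀^ε h(η_s(y)) ds‖ ≤ M‖x − y‖. -/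

import Mathlib

set_option maxHeartbeats 1000000
open MeasureTheory Matrix Set
variable {q : ℕ}



lemma flow_contOn' {b : EuclideanSpace ℝ (Fin q) → EuclideanSpace ℝ (Fin q)}
    {η : ℝ → EuclideanSpace ℝ (Fin q) → EuclideanSpace ℝ (Fin q)}
    (hflow : ∀ t : ℝ, 0 ≤ t → ∀ x, η t x = x + ∫ s in (0:ℝ)..t, b (η s x))
    (x : EuclideanSpace ℝ (Fin q)) {t : ℝ} (ht : 0 ≤ t)
    (hint : IntervalIntegrable (fun s => b (η s x)) volume 0 t) :
    ContinuousOn (fun s => η s x) (Icc 0 t) := by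
  have h1 : ContinuousOn (fun u => x + ∫ s in (0:ℝ)..u, b (η s x)) (Icc 0 t) := by
    have h2 := intervalIntegral.continuousOn_primitive_interval' hint left_mem_uIcc
    rw [uIcc_of_le ht] at h2
    exact continuousOn_const.add h2
  refine h1.congr fun u hu => ?_
  exact hflow u hu.1 x

lemma flow_bound {b : EuclideanSpace ℝ (Fin q) → EuclideanSpace ℝ (Fin q)}
    {Kb : NNReal} (hb : LipschitzWith Kb b)
    {η : ℝ → EuclideanSpace ℝ (Fin q) → EuclideanSpace ℝ (Fin q)}
    (hflow : ∀ t : ℝ, 0 ≤ t → ∀ x, η t x = x + ∫ s in (0:ℝ)..t, b (η s x))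
    (x : EuclideanSpace ℝ (Fin q)) {t : ℝ} (ht : 0 ≤ t) (hKt : (Kb:ℝ) * t ≤ 1/2)
    (hint : IntervalIntegrable (fun s => b (η s x)) volume 0 t) :
    ∀ s ∈ Icc 0 t, ‖η s x - x‖ ≤ 2 * t * ‖b x‖ := by
  have hcont := flow_contOn' hflow x ht hint
  have hfc : ContinuousOn (fun s => ‖η s x - x‖) (Icc 0 t) :=
    (hcont.sub continuousOn_const).norm
  obtain ⟨s₀, hs₀, hmax⟩ := isCompact_Icc.exists_isMaxOn (nonempty_Icc.2 ht) hfc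
  have key : ‖η s₀ x - x‖ ≤ 2 * t * ‖b x‖ := by
    have heq : η s₀ x - x = ∫ s in (0:ℝ)..s₀, b (η s x) := by
      rw [hflow s₀ hs₀.1 x]; abel
    have hintc : IntervalIntegrable (fun s => ‖b x‖ + (Kb:ℝ) * ‖η s₀ x - x‖) volume 0 s₀ :=
      intervalIntegrable_const
    have hsub : Set.uIcc (0:ℝ) s₀ ⊆ Set.uIcc (0:ℝ) t := by
      rw [uIcc_of_le ht, uIcc_of_le hs₀.1]; exact Icc_subset_Icc le_rfl hs₀.2
    have hintn : IntervalIntegrable (fun s => ‖b (η s x)‖) volume 0 s₀ :=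
      (hint.mono_set hsub).norm
    have h3 : ‖η s₀ x - x‖ ≤ ∫ s in (0:ℝ)..s₀, ‖b (η s x)‖ := by
      rw [heq]
      exact intervalIntegral.norm_integral_le_integral_norm hs₀.1
    have h4 : (∫ s in (0:ℝ)..s₀, ‖b (η s x)‖) ≤
        ∫ s in (0:ℝ)..s₀, (‖b x‖ + (Kb:ℝ) * ‖η s₀ x - x‖) := by
      apply intervalIntegral.integral_mono_on hs₀.1 hintn hintc
      intro u hu
      have h5 : ‖b (η u x) - b x‖ ≤ (Kb:ℝ) * ‖η u x - x‖ := by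
        simpa [dist_eq_norm] using hb.dist_le_mul (η u x) x
      have h6 : ‖η u x - x‖ ≤ ‖η s₀ x - x‖ :=
        hmax ⟨hu.1, hu.2.trans hs₀.2⟩
      calc ‖b (η u x)‖ = ‖b x + (b (η u x) - b x)‖ := by congr 1; abel
        _ ≤ ‖b x‖ + ‖b (η u x) - b x‖ := norm_add_le _ _
        _ ≤ ‖b x‖ + (Kb:ℝ) * ‖η s₀ x - x‖ := by
            nlinarith [mul_le_mul_of_nonneg_left h6 Kb.coe_nonneg]
    rw [intervalIntegral.integral_const] at h4
    simp only [smul_eq_mul, sub_zero] at h4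
    have hbx : (0:ℝ) ≤ ‖b x‖ := norm_nonneg _
    have hnx : (0:ℝ) ≤ ‖η s₀ x - x‖ := norm_nonneg _
    have hKs : (Kb:ℝ) * s₀ ≤ 1/2 :=
      le_trans (mul_le_mul_of_nonneg_left hs₀.2 Kb.coe_nonneg) hKt
    nlinarith [mul_le_mul_of_nonneg_right hKs hnx,
      mul_le_mul_of_nonneg_right hs₀.2 hbx, hs₀.1]
  intro s hs
  exact le_trans (hmax hs) key

lemma flow_two_point {b : EuclideanSpace ℝ (Fin q) → EuclideanSpace ℝ (Fin q)}
    {Kb : NNReal} (hb : LipschitzWith Kb b)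
    {η : ℝ → EuclideanSpace ℝ (Fin q) → EuclideanSpace ℝ (Fin q)}
    (hflow : ∀ t : ℝ, 0 ≤ t → ∀ x, η t x = x + ∫ s in (0:ℝ)..t, b (η s x))
    (x y : EuclideanSpace ℝ (Fin q)) {t : ℝ} (ht : 0 ≤ t) (hKt : (Kb:ℝ) * t ≤ 1/2)
    (hix : IntervalIntegrable (fun s => b (η s x)) volume 0 t)
    (hiy : IntervalIntegrable (fun s => b (η s y)) volume 0 t) :
    ∀ s ∈ Icc 0 t, ‖η s x - η s y‖ ≤ 2 * ‖x - y‖ ∧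
      ‖η s x - η s y - (x - y)‖ ≤ (Kb:ℝ) * t * (2 * ‖x - y‖) := by
  have hsub : ∀ s ∈ Icc (0:ℝ) t, Set.uIcc (0:ℝ) s ⊆ Set.uIcc (0:ℝ) t := by
    intro s hs
    rw [uIcc_of_le ht, uIcc_of_le hs.1]; exact Icc_subset_Icc le_rfl hs.2
  have hcx := flow_contOn' hflow x ht hix
  have hcy := flow_contOn' hflow y ht hiy
  have hgc : ContinuousOn (fun s => ‖η s x - η s y‖) (Icc 0 t) := (hcx.sub hcy).norm
  obtain ⟨s₀, hs₀, hmax⟩ := isCompact_Icc.exists_isMaxOn (nonempty_Icc.2 ht) hgc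
  have hisub : ∀ s ∈ Icc (0:ℝ) t,
      IntervalIntegrable (fun u => b (η u x) - b (η u y)) volume 0 s := fun s hs =>
    (hix.mono_set (hsub s hs)).sub (hiy.mono_set (hsub s hs))
  have heq : ∀ s ∈ Icc (0:ℝ) t,
      η s x - η s y - (x - y) = ∫ u in (0:ℝ)..s, (b (η u x) - b (η u y)) := by
    intro s hs
    rw [intervalIntegral.integral_sub (hix.mono_set (hsub s hs)) (hiy.mono_set (hsub s hs)),
      hflow s hs.1 x, hflow s hs.1 y]
    abel
  have hptw : ∀ s ∈ Icc (0:ℝ) t, ∀ u ∈ Icc (0:ℝ) s,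
      ‖b (η u x) - b (η u y)‖ ≤ (Kb:ℝ) * ‖η s₀ x - η s₀ y‖ := by
    intro s hs u hu
    have h5 : ‖b (η u x) - b (η u y)‖ ≤ (Kb:ℝ) * ‖η u x - η u y‖ := by
      simpa [dist_eq_norm] using hb.dist_le_mul (η u x) (η u y)
    have h6 : ‖η u x - η u y‖ ≤ ‖η s₀ x - η s₀ y‖ :=
      hmax ⟨hu.1, hu.2.trans hs.2⟩
    exact h5.trans (mul_le_mul_of_nonneg_left h6 Kb.coe_nonneg)
  have hIbound : ∀ s ∈ Icc (0:ℝ) t,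
      ‖η s x - η s y - (x - y)‖ ≤ s * ((Kb:ℝ) * ‖η s₀ x - η s₀ y‖) := by
    intro s hs
    rw [heq s hs]
    calc ‖∫ u in (0:ℝ)..s, (b (η u x) - b (η u y))‖
        ≤ ∫ u in (0:ℝ)..s, ‖b (η u x) - b (η u y)‖ :=
          intervalIntegral.norm_integral_le_integral_norm hs.1
      _ ≤ ∫ _ in (0:ℝ)..s, ((Kb:ℝ) * ‖η s₀ x - η s₀ y‖) := by
          apply intervalIntegral.integral_mono_on hs.1
            ((hisub s hs).norm) intervalIntegrable_const (hptw s hs)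
      _ = s * ((Kb:ℝ) * ‖η s₀ x - η s₀ y‖) := by
          rw [intervalIntegral.integral_const]; simp
  have hD : (0:ℝ) ≤ ‖x - y‖ := norm_nonneg _
  have hg0 : (0:ℝ) ≤ ‖η s₀ x - η s₀ y‖ := norm_nonneg _
  have hKs : (Kb:ℝ) * s₀ ≤ 1/2 :=
    le_trans (mul_le_mul_of_nonneg_left hs₀.2 Kb.coe_nonneg) hKt
  have key : ‖η s₀ x - η s₀ y‖ ≤ 2 * ‖x - y‖ := by
    have h7 : ‖η s₀ x - η s₀ y‖ ≤ ‖x - y‖ + s₀ * ((Kb:ℝ) * ‖η s₀ x - η s₀ y‖) := by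
      have h8 := hIbound s₀ hs₀
      have h9 : ‖η s₀ x - η s₀ y‖ ≤ ‖x - y‖ + ‖η s₀ x - η s₀ y - (x - y)‖ := by
        have := norm_add_le (x - y) (η s₀ x - η s₀ y - (x - y))
        simpa using this
      linarith
    nlinarith [mul_le_mul_of_nonneg_right hKs hg0]
  intro s hs
  constructor
  · exact le_trans (hmax hs) key
  · calc ‖η s x - η s y - (x - y)‖ ≤ s * ((Kb:ℝ) * ‖η s₀ x - η s₀ y‖) := hIbound s hs
      _ ≤ (Kb:ℝ) * t * (2 * ‖x - y‖) := by
          have h10 : (0:ℝ) ≤ (Kb:ℝ) := Kb.coe_nonneg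
          nlinarith [mul_le_mul_of_nonneg_left key h10, hs.1, hs.2,
            mul_le_mul_of_nonneg_right hs.2 (mul_nonneg h10 hg0)]



lemma flow_integrable {b : EuclideanSpace ℝ (Fin q) → EuclideanSpace ℝ (Fin q)}
    {Kb : NNReal} (hb : LipschitzWith Kb b)
    {η : ℝ → EuclideanSpace ℝ (Fin q) → EuclideanSpace ℝ (Fin q)}
    (hflow : ∀ t : ℝ, 0 ≤ t → ∀ x, η t x = x + ∫ s in (0:ℝ)..t, b (η s x))
    (x : EuclideanSpace ℝ (Fin q)) {t : ℝ} (ht : 0 ≤ t) (hKt : (Kb:ℝ) * t ≤ 1/2) :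
    IntervalIntegrable (fun s => b (η s x)) volume 0 t := by
  set F : ℝ → EuclideanSpace ℝ (Fin q) := fun s => b (η s x) with hF
  by_contra hP
  have hrefl : IntervalIntegrable F volume 0 0 := by
    rw [intervalIntegrable_iff, Set.uIoc, min_self, max_self, Set.Ioc_self]
    exact integrableOn_empty
  have hfix : ∀ u : ℝ, 0 ≤ u → ¬ IntervalIntegrable F volume 0 u → η u x = x := by
    intro u hu hni
    rw [hflow u hu x, intervalIntegral.integral_undef hni, add_zero]
  set S : Set ℝ := {s : ℝ | s ∈ Icc 0 t ∧ IntervalIntegrable F volume 0 s} with hS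
  have h0S : 0 ∈ S := ⟨⟨le_rfl, ht⟩, hrefl⟩
  have hbddS : BddAbove S := ⟨t, fun s hs => hs.1.2⟩
  set τ := sSup S with hτ
  have hτ0 : 0 ≤ τ := le_csSup hbddS h0S
  have hτt : τ ≤ t := csSup_le ⟨0, h0S⟩ (fun s hs => hs.1.2)
  have hlt : ∀ u, 0 ≤ u → u < τ → u ∈ S := by
    intro u hu hut
    obtain ⟨s', hs'S, hus'⟩ := exists_lt_of_lt_csSup ⟨0, h0S⟩ hut
    refine ⟨⟨hu, le_trans hus'.le hs'S.1.2⟩, ?_⟩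
    apply hs'S.2.mono_set
    rw [uIcc_of_le hu, uIcc_of_le hs'S.1.1]
    exact Icc_subset_Icc le_rfl hus'.le
  -- τ is itself in S
  have hτS : IntervalIntegrable F volume 0 τ := by
    rcases eq_or_lt_of_le hτ0 with h0τ | h0τ
    · simpa [← h0τ] using hrefl
    rw [intervalIntegrable_iff_integrableOn_Ioc_of_le hτ0]
    have hIoo : IntegrableOn F (Ioo 0 τ) volume := by
      set g : ℕ → ℝ := fun n => τ - τ / (n + 2) with hg
      have hgS : ∀ n, g n ∈ S := by
        intro n
        have h1 : (0:ℝ) < (n:ℝ) + 2 := by positivity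
        have h2 : τ / ((n:ℝ) + 2) ≤ τ := div_le_self hτ0 (by linarith)
        have h3 : 0 < τ / ((n:ℝ) + 2) := div_pos h0τ h1
        refine hlt (g n) ?_ ?_
        · show (0:ℝ) ≤ τ - τ / ((n:ℝ) + 2); linarith
        · show τ - τ / ((n:ℝ) + 2) < τ; linarith
      have hcover : Ioo 0 τ ⊆ ⋃ n, Ioc 0 (g n) := by
        intro u hu
        obtain ⟨n, hn⟩ := exists_nat_gt (τ / (τ - u))
        refine mem_iUnion.2 ⟨n, hu.1, ?_⟩
        have h4 : 0 < τ - u := by linarith [hu.2]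
        have h5 : τ < ((n:ℝ)) * (τ - u) := by
          rw [div_lt_iff₀ h4] at hn; linarith
        have h6 : τ < ((n:ℝ) + 2) * (τ - u) := by nlinarith
        have h7 : τ / ((n:ℝ) + 2) < τ - u := by
          rw [div_lt_iff₀ (by positivity)]; linarith [mul_comm ((n:ℝ)+2) (τ - u)]
        simp only [hg]; linarith
      have hmeas : AEStronglyMeasurable F (volume.restrict (⋃ n, Ioc 0 (g n))) := by
        rw [aestronglyMeasurable_iUnion_iff]
        intro n
        have := (intervalIntegrable_iff_integrableOn_Ioc_of_le (hgS n).1.1).1 (hgS n).2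
        exact this.aestronglyMeasurable
      have hmeas' : AEStronglyMeasurable F (volume.restrict (Ioo 0 τ)) :=
        hmeas.mono_measure (Measure.restrict_mono hcover le_rfl)
      set B₂ : ℝ := ‖b x‖ + (Kb:ℝ) * (2 * t * ‖b x‖) with hB₂
      have hbd : ∀ u ∈ Ioo (0:ℝ) τ, ‖F u‖ ≤ B₂ := by
        intro u hu
        have huS := hlt u hu.1.le hu.2
        have hKu : (Kb:ℝ) * u ≤ 1/2 := by
          have := mul_le_mul_of_nonneg_left (le_trans hu.2.le hτt) Kb.coe_nonneg
          linarith
        have hbu := flow_bound hb hflow x hu.1.le hKu huS.2 u ⟨hu.1.le, le_rfl⟩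
        have h8 : ‖η u x - x‖ ≤ 2 * t * ‖b x‖ := by
          refine hbu.trans ?_
          have := norm_nonneg (b x)
          nlinarith [le_trans hu.2.le hτt]
        have h9 : ‖b (η u x) - b x‖ ≤ (Kb:ℝ) * ‖η u x - x‖ := by
          simpa [dist_eq_norm] using hb.dist_le_mul (η u x) x
        calc ‖F u‖ = ‖b x + (b (η u x) - b x)‖ := by
              congr 1
              show b (η u x) = b x + (b (η u x) - b x)
              abel
          _ ≤ ‖b x‖ + ‖b (η u x) - b x‖ := norm_add_le _ _
          _ ≤ B₂ := by
              have := mul_le_mul_of_nonneg_left h8 Kb.coe_nonneg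
              simp only [hB₂]; linarith
      refine Integrable.mono' (g := fun _ => B₂)
        (integrableOn_const (C := B₂) (hs := measure_Ioo_lt_top.ne) (hC := enorm_ne_top)) hmeas' ?_
      filter_upwards [ae_restrict_mem measurableSet_Ioo] with u hu using hbd u hu
    exact hIoo.congr_set_ae Ioo_ae_eq_Ioc.symm
  have hτltt : τ < t := by
    rcases eq_or_lt_of_le hτt with h | h
    · exact absurd (h ▸ hτS) hP
    · exact h
  have hconst : ∀ v ∈ Ioc τ t, F v = b x := by
    intro v hv
    have hvS : v ∉ S := fun hvS => absurd (le_csSup hbddS hvS) (not_le.2 hv.1)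
    have hni : ¬ IntervalIntegrable F volume 0 v := by
      intro hint
      exact hvS ⟨⟨le_trans hτ0 hv.1.le, hv.2⟩, hint⟩
    rw [hF]; simp only
    rw [hfix v (le_trans hτ0 hv.1.le) hni]
  have htail : IntervalIntegrable F volume τ t := by
    rw [intervalIntegrable_iff_integrableOn_Ioc_of_le hτltt.le]
    apply (integrableOn_const (C := b x) (hs := measure_Ioc_lt_top.ne) (hC := enorm_ne_top)).congr_fun
      (fun v hv => (hconst v hv).symm) measurableSet_Ioc
  exact hP (hτS.trans htail)
/-- **Lemma 5.1.** Let `η` be the flow of a globally Lipschitz vector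
field `b`, and `h(x) = Cx + h₀(x)` with `C` invertible and the Lipschitz constant of
`x ↦ C⁻¹ h₀(x)` strictly less than `1`. Then there are `ε₀ > 0` and `m, M > 0` with
`m ‖x - y‖ ≤ ‖(1/ε) ∫₀^ε h(η_s(x)) ds - (1/ε) ∫₀^ε h(η_s(y)) ds‖ ≤ M ‖x - y‖`
for all `0 < ε < ε₀` and all `x, y`. -/
theorem stmt11 (q : ℕ)
    (b : EuclideanSpace ℝ (Fin q) → EuclideanSpace ℝ (Fin q))
    (Kb : NNReal) (hb : LipschitzWith Kb b)
    (η : ℝ → EuclideanSpace ℝ (Fin q) → EuclideanSpace ℝ (Fin q))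
    (hflow : ∀ t : ℝ, 0 ≤ t → ∀ x, η t x = x + ∫ s in (0:ℝ)..t, b (η s x))
    (C : Matrix (Fin q) (Fin q) ℝ) (hC : IsUnit C)
    (h h₀ : EuclideanSpace ℝ (Fin q) → EuclideanSpace ℝ (Fin q))
    (hdef : ∀ x, h x = toEuclideanCLM (𝕜 := ℝ) C x + h₀ x)
    (K : NNReal) (hK : (K : ℝ) < 1)
    (hLip : LipschitzWith K (fun x => toEuclideanCLM (𝕜 := ℝ) C⁻¹ (h₀ x))) :
    ∃ ε₀ > (0 : ℝ), ∃ m M : ℝ, 0 < m ∧ 0 < M ∧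
      ∀ ε : ℝ, 0 < ε → ε < ε₀ → ∀ x y : EuclideanSpace ℝ (Fin q),
        m * ‖x - y‖ ≤
            ‖(ε⁻¹ • ∫ s in (0:ℝ)..ε, h (η s x)) - ε⁻¹ • ∫ s in (0:ℝ)..ε, h (η s y)‖ ∧
        ‖(ε⁻¹ • ∫ s in (0:ℝ)..ε, h (η s x)) - ε⁻¹ • ∫ s in (0:ℝ)..ε, h (η s y)‖ ≤
            M * ‖x - y‖ := by
  have hCdet : IsUnit C.det := (Matrix.isUnit_iff_isUnit_det C).1 hC
  set Tc := toEuclideanCLM (𝕜 := ℝ) C with hTcdef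
  set Ti := toEuclideanCLM (𝕜 := ℝ) C⁻¹ with hTidef
  have hmul : Ti * Tc = 1 := by
    rw [hTidef, hTcdef, ← _root_.map_mul, Matrix.nonsing_inv_mul C hCdet, _root_.map_one]
  have hmul' : Tc * Ti = 1 := by
    rw [hTidef, hTcdef, ← _root_.map_mul, Matrix.mul_nonsing_inv C hCdet, _root_.map_one]
  have hTiTc : ∀ v, Ti (Tc v) = v := fun v => by
    rw [← ContinuousLinearMap.mul_apply, hmul, ContinuousLinearMap.one_apply]
  have hTcTi : ∀ v, Tc (Ti v) = v := fun v => by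
    rw [← ContinuousLinearMap.mul_apply, hmul', ContinuousLinearMap.one_apply]
  set g₀ : EuclideanSpace ℝ (Fin q) → EuclideanSpace ℝ (Fin q) :=
    fun a => Ti (h₀ a) with hg₀def
  have hg₀lip : LipschitzWith K g₀ := hLip
  have hg₀norm : ∀ a c, ‖g₀ a - g₀ c‖ ≤ (K:ℝ) * ‖a - c‖ := fun a c => by
    simpa [dist_eq_norm] using hg₀lip.dist_le_mul a c
  have hh₀eq : ∀ a, h₀ a = Tc (g₀ a) := fun a => (hTcTi (h₀ a)).symm
  have hhcont : Continuous h := by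
    have he : h = fun a => Tc a + Tc (g₀ a) := funext fun a => by rw [hdef a, hh₀eq a]
    rw [he]; exact Tc.continuous.add (Tc.continuous.comp hg₀lip.continuous)
  have hK0 : (0:ℝ) ≤ K := K.coe_nonneg
  have hKb0 : (0:ℝ) ≤ Kb := Kb.coe_nonneg
  have hTcn : (0:ℝ) ≤ ‖Tc‖ := norm_nonneg _
  have hhl : ∀ a c, ‖h a - h c‖ ≤ ‖Tc‖ * (1 + (K:ℝ)) * ‖a - c‖ := by
    intro a c
    have e1 : h a - h c = Tc (a - c) + Tc (g₀ a - g₀ c) := by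
      rw [hdef a, hdef c, hh₀eq a, hh₀eq c, map_sub, map_sub]; abel
    calc ‖h a - h c‖ = ‖Tc (a - c) + Tc (g₀ a - g₀ c)‖ := by rw [e1]
      _ ≤ ‖Tc (a - c)‖ + ‖Tc (g₀ a - g₀ c)‖ := norm_add_le _ _
      _ ≤ ‖Tc‖ * ‖a - c‖ + ‖Tc‖ * ((K:ℝ) * ‖a - c‖) :=
          add_le_add (Tc.le_opNorm _) (le_trans (Tc.le_opNorm _)
            (mul_le_mul_of_nonneg_left (hg₀norm a c) hTcn))
      _ = ‖Tc‖ * (1 + (K:ℝ)) * ‖a - c‖ := by ring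
  refine ⟨(1 - (K:ℝ)) / (8 * ((Kb:ℝ) + 1)), div_pos (by linarith) (by positivity),
    (1 - (K:ℝ)) / (2 * (‖Ti‖ + 1)), 2 * ‖Tc‖ * (1 + (K:ℝ)) + 1,
    div_pos (by linarith) (by positivity), by positivity, ?_⟩
  intro ε hε hεlt x y
  set m : ℝ := (1 - (K:ℝ)) / (2 * (‖Ti‖ + 1)) with hmdef
  set D : ℝ := ‖x - y‖ with hDdef
  have hD : (0:ℝ) ≤ D := norm_nonneg _
  have hεc : ε * (8 * ((Kb:ℝ) + 1)) < 1 - K := (lt_div_iff₀ (by positivity)).1 hεlt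
  have hKε : (Kb:ℝ) * ε ≤ 1/2 := by nlinarith
  have h4Kb : 4 * (Kb:ℝ) * ε ≤ (1 - (K:ℝ))/2 := by nlinarith
  have hix := flow_integrable hb hflow x hε.le hKε
  have hiy := flow_integrable hb hflow y hε.le hKε
  have hcx := flow_contOn' hflow x hε.le hix
  have hcy := flow_contOn' hflow y hε.le hiy
  have htp := flow_two_point hb hflow x y hε.le hKε hix hiy
  have huIcc : Set.uIcc (0:ℝ) ε = Icc 0 ε := uIcc_of_le hε.le
  have ihx : IntervalIntegrable (fun s => h (η s x)) volume 0 ε :=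
    ContinuousOn.intervalIntegrable (by rw [huIcc]; exact hhcont.comp_continuousOn hcx)
  have ihy : IntervalIntegrable (fun s => h (η s y)) volume 0 ε :=
    ContinuousOn.intervalIntegrable (by rw [huIcc]; exact hhcont.comp_continuousOn hcy)
  set w : ℝ → EuclideanSpace ℝ (Fin q) :=
    fun s => (η s x - η s y - (x - y)) + (g₀ (η s x) - g₀ (η s y)) with hwdef
  have iw : IntervalIntegrable w volume 0 ε := by
    apply ContinuousOn.intervalIntegrable
    rw [huIcc]
    exact (((hcx.sub hcy).sub continuousOn_const).add
      ((hg₀lip.continuous.comp_continuousOn hcx).sub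
        (hg₀lip.continuous.comp_continuousOn hcy)))
  set A := ∫ s in (0:ℝ)..ε, (h (η s x) - h (η s y)) with hAdef
  have hAeq : (ε⁻¹ • ∫ s in (0:ℝ)..ε, h (η s x)) - ε⁻¹ • ∫ s in (0:ℝ)..ε, h (η s y)
      = ε⁻¹ • A := by
    rw [← smul_sub, hAdef, intervalIntegral.integral_sub ihx ihy]
  have hnorm : ‖ε⁻¹ • A‖ = ε⁻¹ * ‖A‖ := by
    rw [norm_smul, Real.norm_eq_abs, abs_of_pos (inv_pos.2 hε)]
  -- upper bound
  have hc0 : (0:ℝ) ≤ ‖Tc‖ * (1 + (K:ℝ)) := by positivity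
  have hptw2 : ∀ s ∈ Icc (0:ℝ) ε,
      ‖h (η s x) - h (η s y)‖ ≤ ‖Tc‖ * (1 + (K:ℝ)) * (2 * D) := fun s hs =>
    le_trans (hhl _ _) (mul_le_mul_of_nonneg_left (htp s hs).1 hc0)
  have hconst_int : (∫ _ in (0:ℝ)..ε, (‖Tc‖ * (1 + (K:ℝ)) * (2 * D)))
      = ε * (‖Tc‖ * (1 + (K:ℝ)) * (2 * D)) := by
    rw [intervalIntegral.integral_const, smul_eq_mul, sub_zero]
  have hup : ‖A‖ ≤ ε * (‖Tc‖ * (1 + (K:ℝ)) * (2 * D)) := by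
    rw [hAdef, ← hconst_int]
    exact le_trans (intervalIntegral.norm_integral_le_integral_norm hε.le)
      (intervalIntegral.integral_mono_on hε.le (ihx.sub ihy).norm
        intervalIntegrable_const hptw2)
  -- lower bound pieces
  have hTihA : ∀ s, Ti (h (η s x) - h (η s y)) = (x - y) + w s := by
    intro s
    have e2 : ∀ a, Ti (h a) = a + g₀ a := fun a => by
      rw [hdef a, map_add, hTiTc]
    rw [map_sub, e2, e2, hwdef]
    dsimp only
    abel
  have hTiA : Ti A = (ε • (x - y)) + ∫ s in (0:ℝ)..ε, w s := by
    rw [hAdef, ← Ti.intervalIntegral_comp_comm (ihx.sub ihy)]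
    have : (fun s => Ti (h (η s x) - h (η s y))) = fun s => (x - y) + w s :=
      funext hTihA
    rw [this, intervalIntegral.integral_add intervalIntegrable_const iw,
      intervalIntegral.integral_const, sub_zero]
  have hwb : ∀ s ∈ Icc (0:ℝ) ε, ‖w s‖ ≤ (K:ℝ) * D + 4 * (Kb:ℝ) * ε * D := by
    intro s hs
    have h1 := (htp s hs).2
    have h2 : ‖η s x - η s y‖ ≤ D + (Kb:ℝ) * ε * (2 * D) := by
      calc ‖η s x - η s y‖ = ‖(x - y) + (η s x - η s y - (x - y))‖ := by
            congr 1; abel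
        _ ≤ ‖x - y‖ + ‖η s x - η s y - (x - y)‖ := norm_add_le _ _
        _ ≤ D + (Kb:ℝ) * ε * (2 * D) := add_le_add le_rfl h1
    have h3 : ‖g₀ (η s x) - g₀ (η s y)‖ ≤ (K:ℝ) * ‖η s x - η s y‖ := hg₀norm _ _
    calc ‖w s‖ ≤ ‖η s x - η s y - (x - y)‖ + ‖g₀ (η s x) - g₀ (η s y)‖ :=
        norm_add_le _ _
      _ ≤ (K:ℝ) * D + 4 * (Kb:ℝ) * ε * D := by
          nlinarith [mul_le_mul_of_nonneg_left h2 hK0, mul_nonneg (mul_nonneg hKb0 hε.le) hD]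
  have hIw : ‖∫ s in (0:ℝ)..ε, w s‖ ≤ ε * ((K:ℝ) * D + 4 * (Kb:ℝ) * ε * D) := by
    calc ‖∫ s in (0:ℝ)..ε, w s‖ ≤ ∫ s in (0:ℝ)..ε, ‖w s‖ :=
        intervalIntegral.norm_integral_le_integral_norm hε.le
      _ ≤ ∫ _ in (0:ℝ)..ε, ((K:ℝ) * D + 4 * (Kb:ℝ) * ε * D) :=
          intervalIntegral.integral_mono_on hε.le iw.norm intervalIntegrable_const hwb
      _ = ε * ((K:ℝ) * D + 4 * (Kb:ℝ) * ε * D) := by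
          rw [intervalIntegral.integral_const, smul_eq_mul, sub_zero]
  have hεD : ε * D ≤ ‖Ti A‖ + ε * ((K:ℝ) * D + 4 * (Kb:ℝ) * ε * D) := by
    have e3 : ε • (x - y) = Ti A - ∫ s in (0:ℝ)..ε, w s := by rw [hTiA]; abel
    have e4 : ‖ε • (x - y)‖ = ε * D := by
      rw [norm_smul, Real.norm_eq_abs, abs_of_pos hε, hDdef]
    calc ε * D = ‖Ti A - ∫ s in (0:ℝ)..ε, w s‖ := by rw [← e3, e4]
      _ ≤ ‖Ti A‖ + ‖∫ s in (0:ℝ)..ε, w s‖ := norm_sub_le _ _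
      _ ≤ ‖Ti A‖ + ε * ((K:ℝ) * D + 4 * (Kb:ℝ) * ε * D) := add_le_add le_rfl hIw
  have hTiAle : ‖Ti A‖ ≤ (‖Ti‖ + 1) * ‖A‖ := by
    refine le_trans (Ti.le_opNorm A) ?_
    exact mul_le_mul_of_nonneg_right (by linarith) (norm_nonneg A)
  have hTi1 : (0:ℝ) < ‖Ti‖ + 1 := add_pos_of_nonneg_of_pos (norm_nonneg _) one_pos
  have hAge : ε * (m * D) ≤ ‖A‖ := by
    have step : ε * D * (1 - (K:ℝ)) / 2 ≤ (‖Ti‖ + 1) * ‖A‖ := by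
      nlinarith [mul_le_mul_of_nonneg_right h4Kb (mul_nonneg hε.le hD)]
    have e5' : ∀ r : ℝ, 0 < r →
        ε * ((1 - (K:ℝ)) / (2 * r) * D) = (ε * D * (1 - (K:ℝ)) / 2) / r := by
      intro r hr; field_simp
    have e5 : ε * (m * D) = (ε * D * (1 - (K:ℝ)) / 2) / (‖Ti‖ + 1) := by
      rw [hmdef]; exact e5' _ hTi1
    rw [e5, div_le_iff₀ hTi1]
    nlinarith
  rw [hAeq, hnorm]
  constructor
  · have := mul_le_mul_of_nonneg_left hAge (inv_pos.2 hε).le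
    calc m * D = ε⁻¹ * (ε * (m * D)) := by
          rw [← mul_assoc, inv_mul_cancel₀ hε.ne', one_mul]
      _ ≤ ε⁻¹ * ‖A‖ := this
  · have := mul_le_mul_of_nonneg_left hup (inv_pos.2 hε).le
    calc ε⁻¹ * ‖A‖ ≤ ε⁻¹ * (ε * (‖Tc‖ * (1 + (K:ℝ)) * (2 * D))) := this
      _ = ‖Tc‖ * (1 + (K:ℝ)) * (2 * D) := by
          rw [← mul_assoc, inv_mul_cancel₀ hε.ne', one_mul]
      _ ≤ (2 * ‖Tc‖ * (1 + (K:ℝ)) + 1) * D := by nlinarith
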